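/- arXiv:2206.12031 — 3 statements merged into one kernel-verified Lean document; each statement's English description precedes it below -/
import Mathlib

section
/- Under the coordinate transformation x = x̄/w̄^3, y = 1/w̄^4, z = z̄/w̄ (valid for w̄ > 0), the vector field Y(x,y,z) = (α y + γ z + y z, β x - y + x^2, -4x), after multiplying time by w̄^2, pulls back to the vector field on {w̄ > 0} given by: x̄' = z̄ + α w̄ + (3/4) x̄ (w̄^2 - β w̄^3 x̄ - x̄^2) + γ z̄ w̄^4, z̄' = -4 x̄ + (1/4) z̄ (w̄^2 - β w̄^3 x̄ - x̄^2), w̄' = (1/4) w̄ (w̄^2 - β w̄^3 x̄ - x̄^2). -/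
/-- The vector field Y(x,y,z) = (α y + γ z + y z, β x - y + x², -4x). -/
def Yfield (α β γ : ℝ) (p : ℝ × ℝ × ℝ) : ℝ × ℝ × ℝ :=
  (α * p.2.1 + γ * p.2.2 + p.2.1 * p.2.2, β * p.1 - p.2.1 + p.1 ^ 2, -4 * p.1)

/-- The compactification chart Φ(x̄,z̄,w̄) = (x̄/w̄³, 1/w̄⁴, z̄/w̄). -/
noncomputable def Phi (p : ℝ × ℝ × ℝ) : ℝ × ℝ × ℝ :=
  (p.1 / p.2.2 ^ 3, 1 / p.2.2 ^ 4, p.2.1 / p.2.2)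

/-- The desingularized compactified vector field Z. -/
noncomputable def Zfield (α β γ : ℝ) (p : ℝ × ℝ × ℝ) : ℝ × ℝ × ℝ :=
  let x := p.1; let z := p.2.1; let w := p.2.2
  (z + α * w + 3 / 4 * x * (w ^ 2 - β * w ^ 3 * x - x ^ 2) + γ * z * w ^ 4,
   -4 * x + 1 / 4 * z * (w ^ 2 - β * w ^ 3 * x - x ^ 2),
   1 / 4 * w * (w ^ 2 - β * w ^ 3 * x - x ^ 2))

/-- Under Φ with time rescaled by w̄², Y pulls back to Z on {w̄ > 0}:
DΦ(p) · Z(p) = w̄² · Y(Φ(p)). -/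
theorem stmt6 (α β γ : ℝ) (p : ℝ × ℝ × ℝ) (hw : 0 < p.2.2) :
    ∃ D : ℝ × ℝ × ℝ →L[ℝ] ℝ × ℝ × ℝ,
      HasFDerivAt Phi D p ∧ D (Zfield α β γ p) = p.2.2 ^ 2 • Yfield α β γ (Phi p) := by
  have hw0 : p.2.2 ≠ 0 := ne_of_gt hw
  have hX : HasFDerivAt (fun q : ℝ × ℝ × ℝ => q.1)
      (ContinuousLinearMap.fst ℝ ℝ (ℝ × ℝ)) p := hasFDerivAt_fst
  have hZ : HasFDerivAt (fun q : ℝ × ℝ × ℝ => q.2.1)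
      ((ContinuousLinearMap.fst ℝ ℝ ℝ).comp (ContinuousLinearMap.snd ℝ ℝ (ℝ × ℝ))) p :=
    hasFDerivAt_fst.comp p hasFDerivAt_snd
  have hW : HasFDerivAt (fun q : ℝ × ℝ × ℝ => q.2.2)
      ((ContinuousLinearMap.snd ℝ ℝ ℝ).comp (ContinuousLinearMap.snd ℝ ℝ (ℝ × ℝ))) p :=
    hasFDerivAt_snd.comp p hasFDerivAt_snd
  have hg := (hasFDerivAt_inv' hw0).comp p hW
  have h1 := hX.mul ((hg.mul hg).mul hg)
  have h2 := (hasFDerivAt_const (1:ℝ) p).mul (((hg.mul hg).mul hg).mul hg)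
  have h3 := hZ.mul hg
  have hPhi : Phi = fun q : ℝ × ℝ × ℝ =>
      (q.1 * (q.2.2⁻¹ * q.2.2⁻¹ * q.2.2⁻¹), 1 * (q.2.2⁻¹ * q.2.2⁻¹ * q.2.2⁻¹ * q.2.2⁻¹),
        q.2.1 * q.2.2⁻¹) := by
    funext q
    simp only [Phi, div_eq_mul_inv, Prod.mk.injEq]
    refine ⟨?_, ?_, trivial⟩ <;> rw [← mul_inv, ← mul_inv]
    · rw [show q.2.2 * q.2.2 * q.2.2 = q.2.2 ^ 3 by ring]
    · rw [← mul_inv, show q.2.2 * q.2.2 * q.2.2 * q.2.2 = q.2.2 ^ 4 by ring]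
  refine ⟨_, hPhi ▸ (HasFDerivAt.prodMk h1 (HasFDerivAt.prodMk h2 h3)), ?_⟩
  simp only [ContinuousLinearMap.prod_apply, ContinuousLinearMap.add_apply,
    ContinuousLinearMap.coe_smul', Pi.smul_apply, ContinuousLinearMap.comp_apply,
    ContinuousLinearMap.neg_apply, ContinuousLinearMap.mulLeftRight_apply,
    ContinuousLinearMap.coe_fst', ContinuousLinearMap.coe_snd',
    ContinuousLinearMap.smul_apply, smul_eq_mul, Zfield, Yfield, Phi,
    Prod.smul_mk, Prod.mk.injEq, Pi.mul_apply, Function.comp_apply,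
    ContinuousLinearMap.zero_apply]
  refine ⟨?_, ?_, ?_⟩ <;> field_simp <;> ring
end

section
/- Along the blown-up vector field Z_B, parameterizing the cylinder of radius r around the axis {x_B = 0, z_B = -α} by x_B = r cos θ, z_B = 2 r sin θ - α, the average radial flux satisfies ∫₀^{2π} r'(θ, w_B) dθ = (1/8) π r w_B^2 (4 - 3 r^2), where r r' = x_B x_B' + (z_B + α) z_B' / 4 evaluated along Z_B. -/
open Real

/-- Parameterizing the cylinder of radius r around the axis {x_B = 0, z_B = -α}
by x_B = r cos θ, z_B = 2 r sin θ - α, the average radial flux of Z_B satisfies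
∫₀^{2π} r' dθ = (1/8) π r w² (4 - 3r²), where
r r' = γ w⁴ x_B z_B + (1/2) x_B² w² (1 - β x_B w² - x_B²). -/
theorem stmt16 (α β γ r w : ℝ) (hr : 0 < r) :
    ∫ θ in (0 : ℝ)..(2 * π),
        (γ * w ^ 4 * (r * cos θ) * (2 * r * sin θ - α)
          + 1 / 2 * (r * cos θ) ^ 2 * w ^ 2
            * (1 - β * (r * cos θ) * w ^ 2 - (r * cos θ) ^ 2)) / r
      = 1 / 8 * π * r * w ^ 2 * (4 - 3 * r ^ 2) := by
  have hrne : r ≠ 0 := ne_of_gt hr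
  -- antiderivative
  set F : ℝ → ℝ := fun θ =>
    (γ * w ^ 4 * (r ^ 2 * sin θ ^ 2 - α * r * sin θ)
      + w ^ 2 / 2 * (r ^ 2 * (θ / 2 + sin θ * cos θ / 2)
          - β * w ^ 2 * r ^ 3 * (sin θ - sin θ ^ 3 / 3)
          - r ^ 4 * (3 * θ / 8 + 3 / 8 * (sin θ * cos θ)
              + 1 / 4 * (sin θ * cos θ ^ 3)))) / r with hF
  have hderiv : ∀ θ ∈ Set.uIcc (0 : ℝ) (2 * π),
      HasDerivAt F
        ((γ * w ^ 4 * (r * cos θ) * (2 * r * sin θ - α)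
          + 1 / 2 * (r * cos θ) ^ 2 * w ^ 2
            * (1 - β * (r * cos θ) * w ^ 2 - (r * cos θ) ^ 2)) / r) θ := by
    intro θ _
    have hs : HasDerivAt Real.sin (cos θ) θ := Real.hasDerivAt_sin θ
    have hc : HasDerivAt Real.cos (-sin θ) θ := Real.hasDerivAt_cos θ
    have hid : HasDerivAt (fun x : ℝ => x) 1 θ := hasDerivAt_id θ
    have h1 := (((hs.pow 2).const_mul (r ^ 2)).sub (hs.const_mul (α * r))).const_mul (γ * w ^ 4)
    have h2 := ((hid.div_const 2).add ((hs.mul hc).div_const 2)).const_mul (r ^ 2)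
    have h3 := (hs.sub ((hs.pow 3).div_const 3)).const_mul (β * w ^ 2 * r ^ 3)
    have h4 := ((((hid.const_mul 3).div_const 8).add
        ((hs.mul hc).const_mul (3 / 8))).add
        ((hs.mul (hc.pow 3)).const_mul (1 / 4))).const_mul (r ^ 4)
    have H := (h1.add (((h2.sub h3).sub h4).const_mul (w ^ 2 / 2))).div_const r
    rw [hF]
    refine H.congr_deriv (Eq.symm ?_)
    have hsc : sin θ ^ 2 + cos θ ^ 2 = 1 := sin_sq_add_cos_sq θ
    push_cast [Pi.pow_apply]
    linear_combination ((w ^ 2 * r ^ 2 / 4 - β * w ^ 4 * r ^ 3 * cos θ / 2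
      - w ^ 2 * r ^ 4 * (3 / 16 + 3 * cos θ ^ 2 / 8)) / r) * hsc
  have hint : IntervalIntegrable (fun θ =>
      (γ * w ^ 4 * (r * cos θ) * (2 * r * sin θ - α)
        + 1 / 2 * (r * cos θ) ^ 2 * w ^ 2
          * (1 - β * (r * cos θ) * w ^ 2 - (r * cos θ) ^ 2)) / r)
      MeasureTheory.volume 0 (2 * π) := by
    apply Continuous.intervalIntegrable
    fun_prop
  rw [intervalIntegral.integral_eq_sub_of_hasDerivAt hderiv hint]
  simp only [hF, Real.sin_two_pi, Real.cos_two_pi, Real.sin_zero, Real.cos_zero]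
  field_simp
  ring
end

section
/- For the planar vector field W(x̄, z̄) = (z̄ - (3/4) x̄^3, -4 x̄ - (1/4) x̄^2 z̄), every solution is bounded forward in time: if (x̄(t), z̄(t)) is a solution defined on [0, T), then 4 x̄(t)^2 + z̄(t)^2 ≤ 4 x̄(0)^2 + z̄(0)^2 for all t ∈ [0, T). -/
/-- Every solution of x̄' = z̄ - (3/4)x̄³, z̄' = -4x̄ - (1/4)x̄²z̄ on [0,T) is bounded
forward in time: 4x̄(t)² + z̄(t)² ≤ 4x̄(0)² + z̄(0)². -/
theorem stmt18 (x z : ℝ → ℝ) (T : ℝ) (hT : 0 < T)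
    (hx : ∀ t ∈ Set.Ico (0 : ℝ) T, HasDerivAt x (z t - 3 / 4 * x t ^ 3) t)
    (hz : ∀ t ∈ Set.Ico (0 : ℝ) T,
      HasDerivAt z (-4 * x t - 1 / 4 * x t ^ 2 * z t) t) :
    ∀ t ∈ Set.Ico (0 : ℝ) T,
      4 * x t ^ 2 + z t ^ 2 ≤ 4 * x 0 ^ 2 + z 0 ^ 2 := by
  intro t ht
  obtain ⟨ht0, htT⟩ := ht
  set V : ℝ → ℝ := fun s => 4 * x s ^ 2 + z s ^ 2 with hV
  have hsub : Set.Icc (0:ℝ) t ⊆ Set.Ico 0 T := fun s hs =>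
    ⟨hs.1, lt_of_le_of_lt hs.2 htT⟩
  have hVd : ∀ s ∈ Set.Ico (0:ℝ) T,
      HasDerivAt V (-6 * x s ^ 4 - 1/2 * x s ^ 2 * z s ^ 2) s := by
    intro s hs
    have h1 := ((hx s hs).pow 2).const_mul 4
    have h2 := (hz s hs).pow 2
    have := h1.add h2
    exact this.congr_deriv (by norm_num; ring)
  have hmono : AntitoneOn V (Set.Icc 0 t) := by
    apply antitoneOn_of_deriv_nonpos (convex_Icc 0 t)
    · exact fun s hs => (hVd s (hsub hs)).continuousAt.continuousWithinAt
    · intro s hs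
      rw [interior_Icc] at hs
      exact (hVd s (hsub ⟨le_of_lt hs.1, le_of_lt hs.2⟩)).differentiableAt.differentiableWithinAt
    · intro s hs
      rw [interior_Icc] at hs
      rw [(hVd s (hsub ⟨le_of_lt hs.1, le_of_lt hs.2⟩)).deriv]
      nlinarith [sq_nonneg (x s), sq_nonneg (z s), sq_nonneg (x s ^ 2), sq_nonneg (x s * z s)]
  exact hmono (Set.left_mem_Icc.2 ht0) (Set.right_mem_Icc.2 ht0) ht0
end
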